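/- Let E_b = {(x,y) ∈ ℝ² : x² + (y/b)² ≤ 1} with 0 < b ≤ 1, viewed as a subset of ℂ. Then for every polynomial p of degree n ≥ 1 with all roots in E_b, sup_{E_b} |p'| ≥ (b/2) n · sup_{E_b} |p|. -/

import Mathlib

open Polynomial

/-- The key algebraic inequality for the ellipse: the inward "normal" inner product
bound at a boundary point. -/
private lemma ellipse_key (b x y u v : ℝ) (hb : 0 < b) (hb1 : b ≤ 1)
    (hz : x ^ 2 + (y / b) ^ 2 = 1) (hw : u ^ 2 + (v / b) ^ 2 ≤ 1) :
    (b / 2) * Real.sqrt (x ^ 2 + (y / b ^ 2) ^ 2) * ((x - u) ^ 2 + (y - v) ^ 2)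
      ≤ x * (x - u) + (y / b ^ 2) * (y - v) := by
  have hb0 : b ≠ 0 := hb.ne'
  have hb2 : (0:ℝ) < b ^ 2 := by positivity
  have h1 : Real.sqrt (x ^ 2 + (y / b ^ 2) ^ 2) ≤ 1 / b := by
    rw [show (1:ℝ) / b = Real.sqrt ((1 / b) ^ 2) by
      rw [Real.sqrt_sq (by positivity)]]
    apply Real.sqrt_le_sqrt
    have e1 : (y / b ^ 2) ^ 2 = (y / b) ^ 2 / b ^ 2 := by
      field_simp
    have e2 : x ^ 2 ≤ x ^ 2 / b ^ 2 := by
      rw [le_div_iff₀ hb2]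
      nlinarith [mul_nonneg (sq_nonneg x) (by nlinarith : (0:ℝ) ≤ 1 - b ^ 2)]
    have e3 : (1 / b : ℝ) ^ 2 = 1 / b ^ 2 := by field_simp
    rw [e1, e3]
    calc x ^ 2 + (y / b) ^ 2 / b ^ 2 ≤ x ^ 2 / b ^ 2 + (y / b) ^ 2 / b ^ 2 := by
          linarith
      _ = (x ^ 2 + (y / b) ^ 2) / b ^ 2 := by ring
      _ = 1 / b ^ 2 := by rw [hz]
  have h2 : (1 / 2 : ℝ) * ((x - u) ^ 2 + (y - v) ^ 2)
      ≤ x * (x - u) + (y / b ^ 2) * (y - v) := by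
    have key : ∀ X Y U V : ℝ, X ^ 2 + Y ^ 2 = 1 → U ^ 2 + V ^ 2 ≤ 1 →
        (1 / 2 : ℝ) * ((X - U) ^ 2 + (b * Y - b * V) ^ 2)
          ≤ X * (X - U) + Y * (Y - V) := by
      intro X Y U V hz' hw'
      nlinarith [sq_nonneg (Y - V), sq_nonneg b, mul_nonneg
        (by nlinarith : (0:ℝ) ≤ 1 - b ^ 2) (sq_nonneg (Y - V))]
    have h := key x (y / b) u (v / b) hz hw
    have e5 : b * (y / b) = y := by field_simp
    have e6 : b * (v / b) = v := by field_simp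
    have e7 : (y / b) * (y / b - v / b) = (y / b ^ 2) * (y - v) := by
      field_simp
    rw [e5, e6, e7] at h
    exact h
  have hs : (0:ℝ) ≤ (x - u) ^ 2 + (y - v) ^ 2 := by positivity
  calc (b / 2) * Real.sqrt (x ^ 2 + (y / b ^ 2) ^ 2) * ((x - u) ^ 2 + (y - v) ^ 2)
      ≤ (b / 2) * (1 / b) * ((x - u) ^ 2 + (y - v) ^ 2) := by
        apply mul_le_mul_of_nonneg_right _ hs
        exact mul_le_mul_of_nonneg_left h1 (by positivity)
    _ = (1 / 2 : ℝ) * ((x - u) ^ 2 + (y - v) ^ 2) := by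
        field_simp
    _ ≤ x * (x - u) + (y / b ^ 2) * (y - v) := h2

/-- Logarithmic derivative identity for a product of linear factors. -/
private lemma eval_derivative_multiset (s : Multiset ℂ) (z : ℂ) (h : ∀ r ∈ s, z ≠ r) :
    Polynomial.eval z (Polynomial.derivative (s.map (fun r => X - C r)).prod) =
      Polynomial.eval z (s.map (fun r => X - C r)).prod
        * (s.map (fun r => (z - r)⁻¹)).sum := by
  induction s using Multiset.induction_on with
  | empty => simp
  | cons a t ih =>
    have ht : ∀ r ∈ t, z ≠ r := fun r hr => h r (Multiset.mem_cons_of_mem hr)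
    have ha : z - a ≠ 0 := sub_ne_zero.mpr (h a (Multiset.mem_cons_self a t))
    simp only [Multiset.map_cons, Multiset.prod_cons, Multiset.sum_cons,
      derivative_mul, derivative_sub, derivative_X, derivative_C, sub_zero,
      eval_add, eval_mul, eval_sub, eval_X, eval_C, eval_one, one_mul]
    rw [ih ht]
    field_simp

/-- Lower bound for the real part of a sum over a multiset. -/
private lemma re_sum_ge (c : ℝ) (s : Multiset ℂ) (f : ℂ → ℂ)
    (h : ∀ r ∈ s, c ≤ (f r).re) :
    (Multiset.card s : ℝ) * c ≤ ((s.map f).sum).re := by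
  induction s using Multiset.induction_on with
  | empty => simp
  | cons a t ih =>
    have ht := ih (fun r hr => h r (Multiset.mem_cons_of_mem hr))
    have ha := h a (Multiset.mem_cons_self a t)
    simp only [Multiset.map_cons, Multiset.sum_cons, Complex.add_re,
      Multiset.card_cons]
    push_cast
    rw [add_mul, one_mul]
    linarith

/-- Erőd's ellipse theorem: Turán's inequality with constant `b/2` for the
ellipse domain `E_b` with semi-axes `1` and `b`. -/
theorem turan_ellipse (b : ℝ) (hb : 0 < b) (hb1 : b ≤ 1)
    (n : ℕ) (hn : 1 ≤ n) (p : Polynomial ℂ) (hdeg : p.natDegree = n)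
    (hroots : ∀ w : ℂ, p.IsRoot w → w ∈ {z : ℂ | z.re ^ 2 + (z.im / b) ^ 2 ≤ 1}) :
    (b / 2) * n * sSup ((fun z => ‖p.eval z‖) '' {z : ℂ | z.re ^ 2 + (z.im / b) ^ 2 ≤ 1})
      ≤ sSup ((fun z => ‖(Polynomial.derivative p).eval z‖)
          '' {z : ℂ | z.re ^ 2 + (z.im / b) ^ 2 ≤ 1}) := by
  set E : Set ℂ := {z : ℂ | z.re ^ 2 + (z.im / b) ^ 2 ≤ 1} with hE
  have hcont : Continuous fun z : ℂ => z.re ^ 2 + (z.im / b) ^ 2 := by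
    continuity
  have hEclosed : IsClosed E := by
    have : E = (fun z : ℂ => z.re ^ 2 + (z.im / b) ^ 2) ⁻¹' Set.Iic 1 := rfl
    rw [this]
    exact IsClosed.preimage hcont isClosed_Iic
  have hEbdd : Bornology.IsBounded E := by
    apply (Metric.isBounded_closedBall (x := (0:ℂ)) (r := 1)).subset
    intro z hz
    simp only [hE, Set.mem_setOf_eq] at hz
    have him : z.im ^ 2 ≤ (z.im / b) ^ 2 := by
      rw [div_pow, le_div_iff₀ (by positivity)]
      nlinarith [mul_nonneg (sq_nonneg z.im) (by nlinarith : (0:ℝ) ≤ 1 - b ^ 2)]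
    have habs : ‖z‖ ≤ 1 := by
      rw [Complex.norm_def, Complex.normSq_apply]
      rw [show (1:ℝ) = Real.sqrt 1 by simp]
      apply Real.sqrt_le_sqrt
      nlinarith
    simpa [Complex.dist_eq] using habs
  have hEcompact : IsCompact E := Metric.isCompact_of_isClosed_isBounded hEclosed hEbdd
  have hEne : E.Nonempty := ⟨0, by simp [hE]⟩
  have hp0 : p ≠ 0 := by
    intro h
    rw [h] at hdeg
    simp at hdeg
    omega
  -- maximum modulus principle: the max of |p| on E is attained on the frontier
  obtain ⟨z₀, hz₀f, hmax'⟩ := Complex.exists_mem_frontier_isMaxOn_norm hEbdd hEne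
    (p.differentiable.diffContOnCl)
  rw [hEclosed.closure_eq] at hmax'
  have hz₀E : z₀ ∈ E := by
    have := frontier_subset_closure hz₀f
    rwa [hEclosed.closure_eq] at this
  have hmax : ∀ z ∈ E, ‖p.eval z‖ ≤ ‖p.eval z₀‖ := by
    intro z hz
    have := hmax' hz
    simpa using this
  -- z₀ lies on the boundary ellipse
  have hbdry : z₀.re ^ 2 + (z₀.im / b) ^ 2 = 1 := by
    have hle : z₀.re ^ 2 + (z₀.im / b) ^ 2 ≤ 1 := hz₀E
    rcases eq_or_lt_of_le hle with h | h
    · exact h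
    · exfalso
      have hop : IsOpen {z : ℂ | z.re ^ 2 + (z.im / b) ^ 2 < 1} :=
        isOpen_lt hcont continuous_const
      have hsub : {z : ℂ | z.re ^ 2 + (z.im / b) ^ 2 < 1} ⊆ E := by
        intro z hz
        simp only [hE, Set.mem_setOf_eq]
        exact le_of_lt hz
      have : z₀ ∈ interior E := interior_maximal hsub hop h
      rw [frontier, Set.mem_diff] at hz₀f
      exact hz₀f.2 this
  -- E is infinite, so p doesn't vanish identically on E, hence M > 0
  have hInf : E.Infinite := by
    apply Set.Infinite.mono (s := (fun x : ℝ => (x : ℂ)) '' Set.Icc 0 1)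
    · rintro _ ⟨x, hx, rfl⟩
      simp only [hE, Set.mem_setOf_eq, Complex.ofReal_re, Complex.ofReal_im]
      rw [zero_div]
      nlinarith [hx.1, hx.2]
    · exact Set.Infinite.image (Complex.ofReal_injective.injOn)
        (Set.Icc_infinite (by norm_num))
  have hne0 : p.eval z₀ ≠ 0 := by
    intro h0
    apply hp0
    apply p.eq_zero_of_infinite_isRoot
    apply hInf.mono
    intro z hz
    have := hmax z hz
    rw [h0] at this
    simp only [norm_zero] at this
    have : ‖p.eval z‖ = 0 := le_antisymm this (norm_nonneg _)
    simpa [Polynomial.IsRoot] using (norm_eq_zero.mp this)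
  have hM0 : 0 < ‖p.eval z₀‖ := by
    rwa [norm_pos_iff]
  -- roots data
  have hsplits : Splits p := IsAlgClosed.splits p
  have hcard : (Multiset.card p.roots : ℝ) = (n : ℝ) := by
    have := (Polynomial.splits_iff_card_roots).mp hsplits
    rw [this, hdeg]
  have hfact : p = C p.leadingCoeff * (p.roots.map fun a => X - C a).prod :=
    hsplits.eq_prod_roots
  have hz0r : ∀ r ∈ p.roots, z₀ ≠ r := by
    intro r hr heq
    apply hne0
    have : p.IsRoot r := (Polynomial.mem_roots hp0).mp hr
    rw [heq]; exact this
  -- logarithmic derivative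
  set q : Polynomial ℂ := (p.roots.map fun a => X - C a).prod with hq
  set S : ℂ := (p.roots.map fun r => (z₀ - r)⁻¹).sum with hS
  have hdq : Polynomial.derivative p = C p.leadingCoeff * Polynomial.derivative q := by
    conv_lhs => rw [hfact]
    rw [derivative_C_mul]
  have hlog : (Polynomial.derivative p).eval z₀ = p.eval z₀ * S := by
    rw [hdq]
    rw [eval_mul, eval_C]
    rw [eval_derivative_multiset p.roots z₀ hz0r]
    conv_rhs => rw [hfact]
    rw [eval_mul, eval_C]
    ring
  -- the normal direction
  set ν : ℂ := Complex.mk z₀.re (z₀.im / b ^ 2) with hν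
  have hνre : ν.re = z₀.re := rfl
  have hνim : ν.im = z₀.im / b ^ 2 := rfl
  have hνabs : ‖ν‖ = Real.sqrt (z₀.re ^ 2 + (z₀.im / b ^ 2) ^ 2) := by
    rw [Complex.norm_def, Complex.normSq_apply, hνre, hνim]
    ring_nf
  have hν0 : ν ≠ 0 := by
    intro h
    have h1 : z₀.re = 0 := by rw [← hνre, h]; simp
    have h2 : z₀.im / b ^ 2 = 0 := by rw [← hνim, h]; simp
    have h3 : z₀.im = 0 := by
      field_simp at h2
      simpa using h2
    rw [h1, h3] at hbdry
    norm_num at hbdry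
  have hνpos : 0 < ‖ν‖ := norm_pos_iff.mpr hν0
  -- per-root bound
  have hperroot : ∀ r ∈ p.roots, (b / 2) * ‖ν‖ ≤ (ν * (z₀ - r)⁻¹).re := by
    intro r hr
    have hrE : r ∈ E := hroots r ((Polynomial.mem_roots hp0).mp hr)
    have hzr : z₀ - r ≠ 0 := sub_ne_zero.mpr (hz0r r hr)
    have hnsq : 0 < Complex.normSq (z₀ - r) := Complex.normSq_pos.mpr hzr
    have hkey := ellipse_key b z₀.re z₀.im r.re r.im hb hb1 hbdry hrE
    have hre : (ν * (z₀ - r)⁻¹).re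
        = (ν.re * (z₀ - r).re + ν.im * (z₀ - r).im) / Complex.normSq (z₀ - r) := by
      rw [← div_eq_mul_inv, Complex.div_re]
      ring
    rw [hre, le_div_iff₀ hnsq]
    have hsub : (z₀ - r).re = z₀.re - r.re := by simp
    have hsub' : (z₀ - r).im = z₀.im - r.im := by simp
    rw [hsub, hsub', hνre, hνim, hνabs, Complex.normSq_apply, hsub, hsub']
    calc b / 2 * Real.sqrt (z₀.re ^ 2 + (z₀.im / b ^ 2) ^ 2)
          * ((z₀.re - r.re) * (z₀.re - r.re) + (z₀.im - r.im) * (z₀.im - r.im))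
        = (b / 2) * Real.sqrt (z₀.re ^ 2 + (z₀.im / b ^ 2) ^ 2)
          * ((z₀.re - r.re) ^ 2 + (z₀.im - r.im) ^ 2) := by ring
      _ ≤ z₀.re * (z₀.re - r.re) + (z₀.im / b ^ 2) * (z₀.im - r.im) := hkey
  -- sum the per-root bounds
  have hsum : (n : ℝ) * ((b / 2) * ‖ν‖) ≤ (ν * S).re := by
    have := re_sum_ge ((b / 2) * ‖ν‖) p.roots
      (fun r => ν * (z₀ - r)⁻¹) hperroot
    rw [hcard] at this
    have hmul : (p.roots.map fun r => ν * (z₀ - r)⁻¹).sum = ν * S := by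
      rw [hS]
      exact Multiset.sum_map_mul_left
    rwa [hmul] at this
  have hSabs : (n : ℝ) * (b / 2) ≤ ‖S‖ := by
    have h1 : (ν * S).re ≤ ‖ν * S‖ := Complex.re_le_norm _
    rw [norm_mul] at h1
    have h2 : (n : ℝ) * ((b / 2) * ‖ν‖) ≤ ‖ν‖ * ‖S‖ :=
      le_trans hsum h1
    rw [show (n : ℝ) * ((b / 2) * ‖ν‖)
        = ‖ν‖ * ((n : ℝ) * (b / 2)) by ring] at h2
    exact le_of_mul_le_mul_left h2 hνpos
  -- lower bound on |p'(z₀)|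
  have hder : (b / 2) * n * ‖p.eval z₀‖
      ≤ ‖(Polynomial.derivative p).eval z₀‖ := by
    rw [hlog, norm_mul]
    calc (b / 2) * n * ‖p.eval z₀‖
        = ‖p.eval z₀‖ * ((n : ℝ) * (b / 2)) := by ring
      _ ≤ ‖p.eval z₀‖ * ‖S‖ :=
        mul_le_mul_of_nonneg_left hSabs hM0.le
  -- sSup bounds
  have himg_ne : ((fun z => ‖p.eval z‖) '' E).Nonempty :=
    hEne.image _
  have hsup1 : sSup ((fun z => ‖p.eval z‖) '' E)
      ≤ ‖p.eval z₀‖ := by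
    apply Real.sSup_le
    · rintro _ ⟨z, hz, rfl⟩
      exact hmax z hz
    · exact hM0.le
  have hbdd2 : BddAbove ((fun z => ‖(Polynomial.derivative p).eval z‖) '' E) := by
    apply (hEcompact.image ?_).bddAbove
    exact continuous_norm.comp (Polynomial.derivative p).continuous
  have hsup2 : ‖(Polynomial.derivative p).eval z₀‖
      ≤ sSup ((fun z => ‖(Polynomial.derivative p).eval z‖) '' E) :=
    le_csSup hbdd2 ⟨z₀, hz₀E, rfl⟩
  calc (b / 2) * n * sSup ((fun z => ‖p.eval z‖) '' E)
      ≤ (b / 2) * n * ‖p.eval z₀‖ := by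
        apply mul_le_mul_of_nonneg_left hsup1 (by positivity)
    _ ≤ ‖(Polynomial.derivative p).eval z₀‖ := hder
    _ ≤ _ := hsup2
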